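/- Let λ > 0, δ > 0, and for an integer h ≥ 0 define the increment kernel G_h : ℝ → ℝ by G_h(v) = ∫_{max(v, hδ)}^{(h+1)δ} e^{−λ(s−v)} ds for v ≤ (h+1)δ and G_h(v) = 0 for v > (h+1)δ. Then: (i) ∫_ℝ G_0(v)² dv = (e^{−λδ} + λδ − 1)/λ³; and (ii) for every integer h ≥ 1, ∫_ℝ G_0(v) G_h(v) dv = (e^{−λδ} − 1)² e^{−λ(h−1)δ} / (2λ³). Consequently, multiplying by Var L(1) = ρμ^κ gives the autocovariance function of the increments ΔY of the integrated OU process: C_{ΔY}(0) = (ρμ^κ/λ³)(e^{−λδ} + λδ − 1) and C_{ΔY}(h) = (ρμ^κ/(2λ³))(e^{−λδ} − 1)² e^{−λ(h−1)δ} for h ≥ 1. -/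

import Mathlib

open MeasureTheory Set Filter Real
open scoped Topology

/-- The increment kernel of the integrated Ornstein–Uhlenbeck process:
`G_h(v) = ∫_{max(v, hδ)}^{(h+1)δ} e^{−λ(s−v)} ds` for `v ≤ (h+1)δ`, and `0` otherwise. -/
noncomputable def ouIncrementKernel (lam δ : ℝ) (h : ℕ) (v : ℝ) : ℝ :=
  if v ≤ ((h : ℝ) + 1) * δ then
    ∫ s in max v ((h : ℝ) * δ)..((h : ℝ) + 1) * δ, Real.exp (-lam * (s - v))
  else 0


lemma ou_exp_int (lam : ℝ) (hlam : lam ≠ 0) (v a b : ℝ) :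
    ∫ s in a..b, Real.exp (-lam * (s - v)) =
      (Real.exp (-lam * (a - v)) - Real.exp (-lam * (b - v))) / lam := by
  have key : ∀ s : ℝ, HasDerivAt (fun s => -(Real.exp (-lam * (s - v)) / lam))
      (Real.exp (-lam * (s - v))) s := by
    intro s
    have h1 : HasDerivAt (fun s : ℝ => -lam * (s - v)) (-lam) s := by
      simpa using ((hasDerivAt_id s).sub_const v).const_mul (-lam)
    have h2 := (h1.exp.div_const lam).neg
    refine h2.congr_deriv ?_
    field_simp
  rw [intervalIntegral.integral_eq_sub_of_hasDerivAt (fun s _ => key s)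
    (Continuous.intervalIntegrable (by continuity) a b)]
  ring

lemma ou_exp_mul_int {c : ℝ} (hc : c ≠ 0) (a b : ℝ) :
    ∫ x in a..b, Real.exp (c * x) = (Real.exp (c * b) - Real.exp (c * a)) / c := by
  have key : ∀ x : ℝ, HasDerivAt (fun x => Real.exp (c * x) / c) (Real.exp (c * x)) x := by
    intro x
    have h1 : HasDerivAt (fun x : ℝ => c * x) c x := by
      simpa using (hasDerivAt_id x).const_mul c
    have h2 := h1.exp.div_const c
    refine h2.congr_deriv ?_
    field_simp
  rw [intervalIntegral.integral_eq_sub_of_hasDerivAt (fun s _ => key s)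
    (Continuous.intervalIntegrable (by continuity) a b)]
  ring

lemma ou_integrableOn_exp_mul_Iic {c : ℝ} (hc : 0 < c) (a : ℝ) :
    IntegrableOn (fun x => Real.exp (c * x)) (Iic a) := by
  refine integrableOn_Iic_of_intervalIntegral_norm_bounded (Real.exp (c * a) / c) a
    (fun y => (Continuous.intervalIntegrable (by continuity) _ _).1) tendsto_id
    (Eventually.of_forall fun y => ?_)
  simp_rw [Real.norm_of_nonneg (Real.exp_pos _).le, ou_exp_mul_int hc.ne', id]
  have := (Real.exp_pos (c * y)).le
  have h2 := Real.exp_pos (c * a)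
  rw [div_le_div_iff₀ hc hc]
  nlinarith

lemma ou_integral_Iic_exp_mul {c : ℝ} (hc : 0 < c) (a : ℝ) :
    ∫ x in Iic a, Real.exp (c * x) = Real.exp (c * a) / c := by
  refine tendsto_nhds_unique
    (intervalIntegral_tendsto_integral_Iic _ (ou_integrableOn_exp_mul_Iic hc a) tendsto_id) ?_
  have h1 : Tendsto (fun y : ℝ => (Real.exp (c * a) - Real.exp (c * y)) / c) atBot
      (𝓝 ((Real.exp (c * a) - 0) / c)) := by
    refine Tendsto.div_const ?_ c
    exact tendsto_const_nhds.sub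
      (Real.tendsto_exp_atBot.comp (Tendsto.const_mul_atBot hc tendsto_id))
  rw [sub_zero] at h1
  refine h1.congr fun y => ?_
  rw [id, ou_exp_mul_int hc.ne']


lemma ouG0_eval_neg {lam δ : ℝ} (hlam : 0 < lam) (hδ : 0 < δ) {v : ℝ} (hv : v ≤ 0) :
    ouIncrementKernel lam δ 0 v = Real.exp (lam * v) * ((1 - Real.exp (-lam * δ)) / lam) := by
  simp only [ouIncrementKernel, Nat.cast_zero, zero_add, one_mul, zero_mul]
  rw [if_pos (hv.trans hδ.le), max_eq_right hv, ou_exp_int lam hlam.ne' v 0 δ,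
    show -lam * ((0:ℝ) - v) = lam * v by ring,
    show -lam * (δ - v) = -lam * δ + lam * v by ring, Real.exp_add]
  ring

lemma ouG0_eval_mid {lam δ : ℝ} (hlam : 0 < lam) {v : ℝ} (hv0 : 0 ≤ v) (hvδ : v ≤ δ) :
    ouIncrementKernel lam δ 0 v = (1 - Real.exp (-lam * (δ - v))) / lam := by
  simp only [ouIncrementKernel, Nat.cast_zero, zero_add, one_mul, zero_mul]
  rw [if_pos hvδ, max_eq_left hv0, ou_exp_int lam hlam.ne' v v δ,
    show -lam * (v - v) = 0 by ring, Real.exp_zero]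

lemma ouG0_eval_pos {lam δ : ℝ} {v : ℝ} (hv : δ < v) :
    ouIncrementKernel lam δ 0 v = 0 := by
  simp only [ouIncrementKernel, Nat.cast_zero, zero_add, one_mul, zero_mul]
  rw [if_neg (not_le.mpr hv)]

lemma ouGh_eval {lam δ : ℝ} (hlam : 0 < lam) (hδ : 0 < δ) {h : ℕ} (hh : 1 ≤ h)
    {v : ℝ} (hv : v ≤ δ) :
    ouIncrementKernel lam δ h v
      = Real.exp (lam * v)
        * (Real.exp (-lam * (h : ℝ) * δ) * ((1 - Real.exp (-lam * δ)) / lam)) := by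
  have h1 : (1 : ℝ) ≤ (h : ℝ) := by exact_mod_cast hh
  have hδh : δ ≤ (h : ℝ) * δ := le_mul_of_one_le_left hδ.le h1
  have hδh1 : (h : ℝ) * δ ≤ ((h : ℝ) + 1) * δ := by nlinarith
  simp only [ouIncrementKernel]
  rw [if_pos (hv.trans (hδh.trans hδh1)), max_eq_right (hv.trans hδh),
    ou_exp_int lam hlam.ne' v _ _,
    show -lam * ((h : ℝ) * δ - v) = lam * v + -lam * (h : ℝ) * δ by ring,
    show -lam * (((h : ℝ) + 1) * δ - v) = lam * v + -lam * (h : ℝ) * δ + -lam * δ by ring]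
  simp only [Real.exp_add]
  ring

lemma ouIntegral_sq {lam δ : ℝ} (hlam : 0 < lam) (hδ : 0 < δ) :
    (∫ v : ℝ, (ouIncrementKernel lam δ 0 v) ^ 2)
      = (Real.exp (-lam * δ) + lam * δ - 1) / lam ^ 3 := by
  set q : ℝ := Real.exp (-lam * δ) with hq
  set f1 : ℝ → ℝ := fun v => Real.exp ((2 * lam) * v) * ((1 - q) / lam) ^ 2 with hf1
  set f2 : ℝ → ℝ := fun v => ((1 - Real.exp (-lam * (δ - v))) / lam) ^ 2 with hf2
  have hsplit : ∀ v : ℝ, (ouIncrementKernel lam δ 0 v) ^ 2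
      = (Iic (0:ℝ)).indicator f1 v + (Ioc (0:ℝ) δ).indicator f2 v := by
    intro v
    rcases le_or_gt v 0 with hv | hv
    · rw [indicator_of_mem (show v ∈ Iic (0:ℝ) from hv), indicator_of_notMem (fun hm : v ∈ Ioc (0:ℝ) δ => absurd hm.1 (not_lt.mpr hv)),
        ouG0_eval_neg hlam hδ hv, add_zero]
      simp only [hf1, hq]
      rw [show (2 * lam) * v = lam * v + lam * v by ring, Real.exp_add]
      ring
    · rcases le_or_gt v δ with hv2 | hv2
      · rw [indicator_of_notMem (notMem_Iic.mpr hv), indicator_of_mem (show v ∈ Ioc (0:ℝ) δ from ⟨hv, hv2⟩),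
          zero_add, ouG0_eval_mid hlam hv.le hv2]
      · rw [indicator_of_notMem (notMem_Iic.mpr hv),
          indicator_of_notMem (fun hm : v ∈ Ioc (0:ℝ) δ => absurd hm.2 (not_le.mpr hv2)),
          ouG0_eval_pos hv2]
        norm_num
  have hint1 : Integrable ((Iic (0:ℝ)).indicator f1) := by
    rw [integrable_indicator_iff measurableSet_Iic]
    exact (ou_integrableOn_exp_mul_Iic (by positivity) 0).mul_const _
  have hint2 : Integrable ((Ioc (0:ℝ) δ).indicator f2) := by
    rw [integrable_indicator_iff measurableSet_Ioc]
    exact Continuous.integrableOn_Ioc (by continuity)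
  have key : ∀ v : ℝ, HasDerivAt
      (fun v => (v - 2 * q * Real.exp (lam * v) / lam
        + q ^ 2 * Real.exp ((2 * lam) * v) / (2 * lam)) / lam ^ 2) (f2 v) v := by
    intro v
    have e1 : HasDerivAt (fun v : ℝ => Real.exp (lam * v)) (Real.exp (lam * v) * lam) v := by
      simpa using ((hasDerivAt_id v).const_mul lam).exp
    have e2 : HasDerivAt (fun v : ℝ => Real.exp ((2 * lam) * v))
        (Real.exp ((2 * lam) * v) * (2 * lam)) v := by
      simpa using ((hasDerivAt_id v).const_mul (2 * lam)).exp
    have hd := (((hasDerivAt_id v).sub ((e1.const_mul (2 * q)).div_const lam)).add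
        ((e2.const_mul (q ^ 2)).div_const (2 * lam))).div_const (lam ^ 2)
    refine hd.congr_deriv ?_
    rw [hf2]
    simp only
    rw [show -lam * (δ - v) = -lam * δ + lam * v by ring, Real.exp_add,
      show (2 * lam) * v = lam * v + lam * v by ring, Real.exp_add, ← hq]
    field_simp
    ring
  have hi2 : ∫ v in Ioc (0:ℝ) δ, f2 v = ∫ v in (0:ℝ)..δ, f2 v :=
    (intervalIntegral.integral_of_le hδ.le).symm
  rw [show (fun v : ℝ => (ouIncrementKernel lam δ 0 v) ^ 2)
      = fun v => (Iic (0:ℝ)).indicator f1 v + (Ioc (0:ℝ) δ).indicator f2 v from funext hsplit,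
    integral_add hint1 hint2, integral_indicator measurableSet_Iic,
    integral_indicator measurableSet_Ioc, hi2,
    intervalIntegral.integral_eq_sub_of_hasDerivAt (fun v _ => key v)
      (Continuous.intervalIntegrable (by rw [hf2]; fun_prop) 0 δ)]
  have hE := Real.exp_ne_zero (lam * δ)
  rw [hf1, integral_mul_const, ou_integral_Iic_exp_mul (by positivity) 0, hq,
    show -lam * δ = -(lam * δ) by ring, Real.exp_neg,
    show (2 * lam) * δ = lam * δ + lam * δ by ring, Real.exp_add, mul_zero, Real.exp_zero]
  simp only [mul_zero, Real.exp_zero]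
  field_simp
  ring

lemma ouIntegral_cross {lam δ : ℝ} (hlam : 0 < lam) (hδ : 0 < δ) {h : ℕ} (hh : 1 ≤ h) :
    (∫ v : ℝ, ouIncrementKernel lam δ 0 v * ouIncrementKernel lam δ h v)
      = (Real.exp (-lam * δ) - 1) ^ 2 * Real.exp (-lam * ((h : ℝ) - 1) * δ)
          / (2 * lam ^ 3) := by
  set q : ℝ := Real.exp (-lam * δ) with hq
  set d : ℝ := Real.exp (-lam * (h : ℝ) * δ) with hd
  set c : ℝ := (1 - q) / lam with hc
  set f1 : ℝ → ℝ := fun v => Real.exp ((2 * lam) * v) * (d * c ^ 2) with hf1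
  set f2 : ℝ → ℝ := fun v =>
    ((1 - Real.exp (-lam * (δ - v))) / lam) * (Real.exp (lam * v) * (d * c)) with hf2
  have hsplit : ∀ v : ℝ, ouIncrementKernel lam δ 0 v * ouIncrementKernel lam δ h v
      = (Iic (0:ℝ)).indicator f1 v + (Ioc (0:ℝ) δ).indicator f2 v := by
    intro v
    rcases le_or_gt v 0 with hv | hv
    · rw [indicator_of_mem (show v ∈ Iic (0:ℝ) from hv), indicator_of_notMem (fun hm : v ∈ Ioc (0:ℝ) δ => absurd hm.1 (not_lt.mpr hv)),
        ouG0_eval_neg hlam hδ hv, ouGh_eval hlam hδ hh (hv.trans hδ.le), add_zero]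
      simp only [hf1, hq, hd, hc]
      rw [show (2 * lam) * v = lam * v + lam * v by ring, Real.exp_add]
      ring
    · rcases le_or_gt v δ with hv2 | hv2
      · rw [indicator_of_notMem (notMem_Iic.mpr hv), indicator_of_mem (show v ∈ Ioc (0:ℝ) δ from ⟨hv, hv2⟩),
          zero_add, ouG0_eval_mid hlam hv.le hv2, ouGh_eval hlam hδ hh hv2]
      · rw [indicator_of_notMem (notMem_Iic.mpr hv),
          indicator_of_notMem (fun hm : v ∈ Ioc (0:ℝ) δ => absurd hm.2 (not_le.mpr hv2)),
          ouG0_eval_pos hv2]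
        norm_num
  have hint1 : Integrable ((Iic (0:ℝ)).indicator f1) := by
    rw [integrable_indicator_iff measurableSet_Iic]
    exact (ou_integrableOn_exp_mul_Iic (by positivity) 0).mul_const _
  have hint2 : Integrable ((Ioc (0:ℝ) δ).indicator f2) := by
    rw [integrable_indicator_iff measurableSet_Ioc]
    exact Continuous.integrableOn_Ioc (by rw [hf2]; fun_prop)
  have key : ∀ v : ℝ, HasDerivAt
      (fun v => (d * c / lam) * (Real.exp (lam * v) / lam
        - q * Real.exp ((2 * lam) * v) / (2 * lam))) (f2 v) v := by
    intro v
    have e1 : HasDerivAt (fun v : ℝ => Real.exp (lam * v)) (Real.exp (lam * v) * lam) v := by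
      simpa using ((hasDerivAt_id v).const_mul lam).exp
    have e2 : HasDerivAt (fun v : ℝ => Real.exp ((2 * lam) * v))
        (Real.exp ((2 * lam) * v) * (2 * lam)) v := by
      simpa using ((hasDerivAt_id v).const_mul (2 * lam)).exp
    have hd2 := (((e1.div_const lam).sub
        ((e2.const_mul q).div_const (2 * lam))).const_mul (d * c / lam))
    refine hd2.congr_deriv ?_
    rw [hf2]
    simp only
    rw [show -lam * (δ - v) = -lam * δ + lam * v by ring, Real.exp_add,
      show (2 * lam) * v = lam * v + lam * v by ring, Real.exp_add, ← hq]
    field_simp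
  have hi2 : ∫ v in Ioc (0:ℝ) δ, f2 v = ∫ v in (0:ℝ)..δ, f2 v :=
    (intervalIntegral.integral_of_le hδ.le).symm
  rw [show (fun v : ℝ => ouIncrementKernel lam δ 0 v * ouIncrementKernel lam δ h v)
      = fun v => (Iic (0:ℝ)).indicator f1 v + (Ioc (0:ℝ) δ).indicator f2 v from funext hsplit,
    integral_add hint1 hint2, integral_indicator measurableSet_Iic,
    integral_indicator measurableSet_Ioc, hi2,
    intervalIntegral.integral_eq_sub_of_hasDerivAt (fun v _ => key v)
      (Continuous.intervalIntegrable (by rw [hf2]; fun_prop) 0 δ)]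
  have hE := Real.exp_ne_zero (lam * δ)
  rw [hf1, integral_mul_const, ou_integral_Iic_exp_mul (by positivity) 0,
    show -lam * ((h : ℝ) - 1) * δ = -lam * (h : ℝ) * δ + lam * δ by ring, Real.exp_add, ← hd,
    hc, hq, show -lam * δ = -(lam * δ) by ring, Real.exp_neg,
    show (2 * lam) * δ = lam * δ + lam * δ by ring, Real.exp_add, mul_zero, Real.exp_zero]
  simp only [mul_zero, Real.exp_zero]
  field_simp
  ring

/-- Autocovariance of the increments `ΔY` of the integrated OU process driven by a
Lévy subordinator with `Var L(1) = ρ μ^κ`: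
(i) `∫ G₀² = (e^{−λδ} + λδ − 1)/λ³`,
(ii) `∫ G₀ G_h = (e^{−λδ} − 1)² e^{−λ(h−1)δ}/(2λ³)` for `h ≥ 1`, and consequently
`C_ΔY(0) = (ρμ^κ/λ³)(e^{−λδ} + λδ − 1)` and
`C_ΔY(h) = (ρμ^κ/(2λ³))(e^{−λδ} − 1)² e^{−λ(h−1)δ}` for `h ≥ 1`. -/
theorem integrated_OU_autocovariance (lam δ μ ρ κ : ℝ) (hlam : 0 < lam) (hδ : 0 < δ)
    (hμ : 0 < μ) (hρ : 0 < ρ) :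
    ((∫ v : ℝ, (ouIncrementKernel lam δ 0 v) ^ 2)
        = (Real.exp (-lam * δ) + lam * δ - 1) / lam ^ 3)
    ∧ (∀ h : ℕ, 1 ≤ h →
        (∫ v : ℝ, ouIncrementKernel lam δ 0 v * ouIncrementKernel lam δ h v)
          = (Real.exp (-lam * δ) - 1) ^ 2 * Real.exp (-lam * ((h : ℝ) - 1) * δ)
              / (2 * lam ^ 3))
    ∧ ((ρ * μ ^ κ) * ∫ v : ℝ, (ouIncrementKernel lam δ 0 v) ^ 2
        = (ρ * μ ^ κ / lam ^ 3) * (Real.exp (-lam * δ) + lam * δ - 1))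
    ∧ (∀ h : ℕ, 1 ≤ h →
        (ρ * μ ^ κ) * ∫ v : ℝ, ouIncrementKernel lam δ 0 v * ouIncrementKernel lam δ h v
          = (ρ * μ ^ κ / (2 * lam ^ 3)) * (Real.exp (-lam * δ) - 1) ^ 2
              * Real.exp (-lam * ((h : ℝ) - 1) * δ)) := by
  refine ⟨ouIntegral_sq hlam hδ, fun h hh => ouIntegral_cross hlam hδ hh, ?_, fun h hh => ?_⟩
  · rw [ouIntegral_sq hlam hδ]; ring
  · rw [ouIntegral_cross hlam hδ hh]; ring
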